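/- Let $K$ be a field, $X$ the generic skew-symmetric $n \times n$ matrix, and $g_1, \ldots, g_n$ the entries of $XY$ with $Y$ the generic column. For every $1 \le t \le n-2$, the ideal $\langle g_1, \ldots, g_t \rangle$ is prime in $R$. -/

import Mathlib

open MvPolynomial Matrix Finset

namespace SkewAux

variable {K : Type*} [Field K] {n : ℕ}

/-- The variable type. -/
abbrev σn (n : ℕ) := ({p : Fin n × Fin n // p.1 < p.2} ⊕ Fin n)
/-- The polynomial ring. -/
abbrev Rn (K : Type*) [Field K] (n : ℕ) := MvPolynomial (σn n) K

noncomputable def xx (i j : Fin n) : Rn K n :=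
  if h : i < j then X (Sum.inl ⟨(i,j),h⟩) else
    if h' : j < i then -X (Sum.inl ⟨(j,i),h'⟩) else 0

noncomputable def yy (k : Fin n) : Rn K n := X (Sum.inr k)

noncomputable def xxn (i : ℕ) (k : Fin n) : Rn K n :=
  if h : i < n then xx ⟨i,h⟩ k else 0

noncomputable def Gn (l i : ℕ) : Rn K n :=
  ∑ k ∈ univ.filter (fun k : Fin n => (k:ℕ) < l), xxn i k * yy k

noncomputable def Ide (l t : ℕ) : Ideal (Rn K n) :=
  Ideal.span (Set.range fun i : Fin t => Gn l (i : ℕ))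

lemma Gn_succ (l : ℕ) (hl : l < n) (i : ℕ) :
    (Gn (l+1) i : Rn K n) = Gn l i + xxn i ⟨l,hl⟩ * yy ⟨l,hl⟩ := by
  unfold Gn
  have : (univ.filter (fun k : Fin n => (k:ℕ) < l+1))
      = insert (⟨l,hl⟩ : Fin n) (univ.filter (fun k : Fin n => (k:ℕ) < l)) := by
    ext k
    simp only [mem_filter, mem_univ, true_and, mem_insert, Fin.ext_iff]
    omega
  rw [this, sum_insert (by simp)]
  ring

lemma mem_Ide_iff {l t : ℕ} {f : Rn K n} :
    f ∈ (Ide l t : Ideal (Rn K n)) ↔ ∃ c : Fin t → Rn K n, ∑ i, c i * Gn l (i:ℕ) = f :=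
  Ideal.mem_span_range_iff_exists_fun

lemma Gn_mem_Ide {l t i : ℕ} (hi : i < t) : (Gn l i : Rn K n) ∈ (Ide l t : Ideal (Rn K n)) :=
  Ideal.subset_span ⟨⟨i, hi⟩, rfl⟩

lemma Ide_zero (l : ℕ) : (Ide l 0 : Ideal (Rn K n)) = ⊥ := by
  unfold Ide
  rw [Set.range_eq_empty, Ideal.span_empty]

lemma xxn_coe (i k : Fin n) : (xxn (i:ℕ) k : Rn K n) = xx i k := by
  unfold xxn; rw [dif_pos i.isLt, Fin.eta]

/-- Key non-membership: `Gn l j` is not in the ideal generated by `Gn l i`, `i < t ≤ j`. -/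
lemma Gn_not_mem {l t j : ℕ} (hl : l ≤ n) (h2 : 2 ≤ l) (hj : j < l) (htj : t ≤ j) :
    (Gn l j : Rn K n) ∉ (Ide l t : Ideal (Rn K n)) := by
  obtain ⟨k0, hk0l, hk0j⟩ : ∃ k0 : ℕ, k0 < l ∧ k0 ≠ j :=
    ⟨if j = 0 then 1 else 0, by split <;> omega, by split <;> omega⟩
  set jf : Fin n := ⟨j, lt_of_lt_of_le hj hl⟩ with hjf
  set kf : Fin n := ⟨k0, lt_of_lt_of_le hk0l hl⟩ with hkf
  have hjfkf : jf ≠ kf := by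
    simp only [hjf, hkf, Ne, Fin.ext_iff]; omega
  classical
  set ev : σn n → K := fun v =>
    match v with
    | Sum.inl q => if (q.1.1 = jf ∧ q.1.2 = kf) ∨ (q.1.1 = kf ∧ q.1.2 = jf) then 1 else 0
    | Sum.inr k => if k = kf then 1 else 0
    with hev
  -- collapse of the evaluated sum
  have hGn : ∀ i : ℕ, (eval ev (Gn l i) : K) = eval ev (xxn i kf) := by
    intro i
    unfold Gn
    rw [map_sum]
    rw [Finset.sum_eq_single_of_mem kf (by simp [hkf, hk0l])]
    · simp [yy, hev]
    · intro k _ hk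
      have : eval ev (yy k) = 0 := by simp [yy, hev, hk]
      rw [_root_.map_mul, this, mul_zero]
  -- evaluation of the generators is 0
  have hzero : ∀ i : ℕ, i ≠ j → (eval ev (Gn l i) : K) = 0 := by
    intro i hij
    rw [hGn]
    unfold xxn
    split
    · next h =>
      unfold xx
      split
      · next h1 =>
        simp only [eval_X, hev]
        rw [if_neg]
        rintro (⟨ha, _⟩ | ⟨_, hb⟩)
        · exact hij (by simpa [hjf, Fin.ext_iff] using ha)
        · exact hjfkf hb.symm
      · split
        · next h1' =>
          simp only [map_neg, eval_X, hev]
          rw [if_neg, neg_zero]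
          rintro (⟨ha, _⟩ | ⟨_, hb⟩)
          · exact hjfkf (by rw [ha])
          · exact hij (by simpa [hjf, Fin.ext_iff] using hb)
        · simp
    · simp
  -- evaluation of Gn l j is ±1
  have hone : (eval ev (Gn l j) : K) = 1 ∨ (eval ev (Gn l j) : K) = -1 := by
    rw [hGn]
    unfold xxn
    rw [dif_pos (lt_of_lt_of_le hj hl)]
    unfold xx
    have hjne : (⟨j, lt_of_lt_of_le hj hl⟩ : Fin n) ≠ kf := by
      simp only [hkf, Ne, Fin.ext_iff]; omega
    rcases lt_or_gt_of_ne hjne with h1 | h1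
    · left
      rw [dif_pos h1]
      simp only [eval_X, hev]
      split_ifs with hcond
      · rfl
      · simp at hcond; exact absurd rfl hcond.1
    · right
      rw [dif_neg (asymm h1), dif_pos h1]
      simp only [map_neg, eval_X, hev]
      split_ifs with hcond
      · rfl
      · simp at hcond; exact absurd rfl hcond.2
  intro hmem
  have hle : (Ide l t : Ideal (Rn K n)) ≤ RingHom.ker (eval ev : Rn K n →+* K) := by
    rw [Ide, Ideal.span_le]
    rintro p ⟨i, rfl⟩
    have : ((i : ℕ) : ℕ) ≠ j := by omega
    exact hzero _ this
  have := hle hmem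
  rw [RingHom.mem_ker] at this
  rcases hone with h | h <;> rw [this] at h
  · exact one_ne_zero h.symm
  · exact one_ne_zero (neg_eq_zero.mp h.symm)


/-- An antisymmetric-coefficient double sum against a symmetric product vanishes. -/
lemma sum_skew {t : ℕ} (e : ℕ → ℕ → Rn K n)
    (hske : ∀ i j, e i j = - e j i) (hdiag : ∀ i, e i i = 0) (m : ℕ → Rn K n) :
    ∑ i ∈ range t, ∑ j ∈ range t, e i j * (m j * m i) = 0 := by
  rw [← Finset.sum_product']
  apply Finset.sum_involution (fun p _ => Prod.swap p)
  · rintro ⟨i, j⟩ _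
    simp only [Prod.swap]
    rw [hske i j]
    ring
  · rintro ⟨i, j⟩ _ hne
    simp only [Prod.swap, Ne, Prod.mk.injEq]
    rintro ⟨rfl, h⟩
    exact hne (by rw [hdiag, zero_mul])
  · rintro ⟨i, j⟩ hp
    simp only [Finset.mem_product] at hp ⊢
    exact ⟨hp.2, hp.1⟩
  · rintro ⟨i, j⟩ _
    rfl

/-- Setting a variable to `0` changes a polynomial by a multiple of that variable. -/
lemma sub_aeval_mem (w : σn n) (f : Rn K n) :
    f - aeval (fun v => if v = w then 0 else X v) f ∈ Ideal.span {(X w : Rn K n)} := by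
  induction f using MvPolynomial.induction_on with
  | C a => rw [aeval_C, algebraMap_eq, sub_self]; exact Ideal.zero_mem _
  | add p q hp hq =>
      rw [map_add]
      have : p + q - (aeval (fun v => if v = w then 0 else X v) p
          + aeval (fun v => if v = w then 0 else X v) q)
          = (p - aeval (fun v => if v = w then 0 else X v) p)
          + (q - aeval (fun v => if v = w then 0 else X v) q) := by ring
      rw [this]
      exact Ideal.add_mem _ hp hq
  | mul_X p v hp =>
      rw [_root_.map_mul, aeval_X]
      by_cases hv : v = w
      · rw [if_pos hv, mul_zero, sub_zero, hv]
        exact Ideal.mul_mem_left _ _ (Ideal.subset_span rfl)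
      · rw [if_neg hv]
        have : p * X v - aeval (fun v => if v = w then 0 else X v) p * X v
            = (p - aeval (fun v => if v = w then 0 else X v) p) * X v := by ring
        rw [this]
        exact Ideal.mul_mem_right _ _ hp

/-- Koszul relations: relations among the `Gn l i` are generated by the trivial ones,
assuming primality of the smaller ideals. -/
lemma koszul {l : ℕ} (hl : l ≤ n) :
    ∀ t, t ≤ l - 1 → (∀ j, j < t → (Ide l j : Ideal (Rn K n)).IsPrime) →
    ∀ a : ℕ → Rn K n, ∑ i ∈ range t, a i * Gn l i = 0 →
    ∃ c : ℕ → ℕ → Rn K n, (∀ i j, c i j = - c j i) ∧ (∀ i, c i i = 0) ∧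
      ∀ i < t, a i = ∑ j ∈ range t, c i j * Gn l j := by
  intro t
  induction t with
  | zero => exact fun _ _ a _ => ⟨0, by simp, by simp, by omega⟩
  | succ t ih =>
      intro ht hp a ha
      have h2 : 2 ≤ l := by omega
      -- a t * Gn l t ∈ Ide l t
      rw [Finset.sum_range_succ] at ha
      have hmem : a t * Gn l t ∈ (Ide l t : Ideal (Rn K n)) := by
        have : a t * Gn l t = -∑ i ∈ range t, a i * Gn l i := by
          rw [eq_neg_iff_add_eq_zero, add_comm]; exact ha
        rw [this]
        exact neg_mem (Ideal.sum_mem _ (fun i hi =>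
          Ideal.mul_mem_left _ _ (Gn_mem_Ide (mem_range.mp hi))))
      have hprime : (Ide l t : Ideal (Rn K n)).IsPrime := hp t (by omega)
      have hGnot : (Gn l t : Rn K n) ∉ (Ide l t : Ideal (Rn K n)) :=
        Gn_not_mem hl h2 (by omega) le_rfl
      have hat : a t ∈ (Ide l t : Ideal (Rn K n)) := by
        rcases hprime.mem_or_mem hmem with h | h
        · exact h
        · exact absurd h hGnot
      obtain ⟨wfin, hw⟩ := mem_Ide_iff.mp hat
      set w : ℕ → Rn K n := fun i => if h : i < t then wfin ⟨i, h⟩ else 0 with hwdef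
      have hwsum : ∑ i ∈ range t, w i * Gn l i = a t := by
        rw [← hw, ← Fin.sum_univ_eq_sum_range (fun i => w i * Gn l i) t]
        refine Finset.sum_congr rfl (fun i _ => ?_)
        rw [hwdef]; simp [i.isLt]
      -- modified relation among the first t
      set a' : ℕ → Rn K n := fun i => a i + w i * Gn l t with ha'def
      have ha' : ∑ i ∈ range t, a' i * Gn l i = 0 := by
        have expand : ∑ i ∈ range t, a' i * Gn l i
            = ∑ i ∈ range t, a i * Gn l i + (∑ i ∈ range t, w i * Gn l i) * Gn l t := by
          rw [Finset.sum_mul, ← Finset.sum_add_distrib]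
          exact Finset.sum_congr rfl (fun i _ => by rw [ha'def]; ring)
        rw [expand, hwsum]
        exact ha
      obtain ⟨d, hd1, hd2, hd3⟩ := ih (by omega) (fun j hj => hp j (by omega)) a' ha'
      refine ⟨fun i j =>
        if i < t ∧ j < t then d i j
        else if i < t ∧ j = t then - w i
        else if i = t ∧ j < t then w j
        else 0, ?_, ?_, ?_⟩
      · intro i j
        by_cases h1 : i < t <;> by_cases h2' : j < t <;>
          by_cases h3 : i = t <;> by_cases h4 : j = t <;>
          simp only [h1, h2', h3, h4, and_true, and_false, true_and, false_and,
            if_true, if_false] <;> first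
          | exact hd1 i j
          | omega
          | simp
          | rw [neg_neg]
      · intro i
        by_cases h1 : i < t
        · simp only [h1, and_self, if_true]; exact hd2 i
        · have : ¬ (i < t ∧ i < t) := by omega
          have h2' : ¬ (i < t ∧ i = t) := by omega
          have h3 : ¬ (i = t ∧ i < t) := by omega
          simp only [this, h2', h3, if_false]
      · intro i hi
        rw [Finset.sum_range_succ]
        by_cases h1 : i < t
        · have : a i = a' i - w i * Gn l t := by rw [ha'def]; ring
          rw [this, hd3 i h1]
          have e1 : ∀ j ∈ range t,
              (if i < t ∧ j < t then d i j
               else if i < t ∧ j = t then - w i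
               else if i = t ∧ j < t then w j else 0) * Gn l j = d i j * Gn l j := by
            intro j hj
            have hj' : j < t := mem_range.mp hj
            simp only [h1, hj', and_self, if_true]
          rw [Finset.sum_congr rfl e1]
          beta_reduce
          split_ifs with hA hB hC
          · exact absurd hA.2 (lt_irrefl t)
          · ring
          · exact absurd hC.1 (by omega)
          · exact absurd ⟨h1, rfl⟩ hB
        · have hit : i = t := by omega
          have e1 : ∀ j ∈ range t,
              (if i < t ∧ j < t then d i j
               else if i < t ∧ j = t then - w i
               else if i = t ∧ j < t then w j else 0) * Gn l j = w j * Gn l j := by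
            intro j hj
            have hj' : j < t := mem_range.mp hj
            rw [if_neg (by omega), if_neg (by omega), if_pos ⟨hit, hj'⟩]
          rw [Finset.sum_congr rfl e1, hwsum]
          beta_reduce
          split_ifs with hA hB hC
          · exact absurd hA.2 (lt_irrefl t)
          · exact absurd hB.1 (by omega)
          · exact absurd hC.2 (lt_irrefl t)
          · rw [hit]; ring


set_option maxHeartbeats 2000000 in
lemma Ide_isPrime : ∀ l ≤ n, ∀ t, t ≤ l - 2 → (Ide l t : Ideal (Rn K n)).IsPrime := by
  intro l
  induction l with
  | zero =>
      intro _ t ht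
      have : t = 0 := by omega
      subst this
      rw [Ide_zero]
      exact Ideal.bot_prime
  | succ l IH =>
      intro hln t ht
      rcases Nat.eq_zero_or_pos t with rfl | htpos
      · rw [Ide_zero]; exact Ideal.bot_prime
      have hl2 : 2 ≤ l := by omega
      have hlt : t ≤ l - 1 := by omega
      have hln' : l < n := by omega
      classical
      set yv : Fin n := ⟨l, hln'⟩ with hyv
      set y : Rn K n := yy yv with hy
      have hy0 : y ≠ 0 := X_ne_zero _
      set Loc := Localization.Away y with hLoc
      letI : Algebra K Loc := ((algebraMap (Rn K n) Loc).comp (algebraMap K (Rn K n))).toAlgebra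
      set fn : σn n → Loc := Sum.elim
        (fun q => if ((q.1.2 : ℕ) = l ∧ (q.1.1 : ℕ) < t) then
            -(algebraMap (Rn K n) Loc (Gn l (q.1.1 : ℕ))) * IsLocalization.Away.invSelf y
          else algebraMap (Rn K n) Loc (X (Sum.inl q)))
        (fun k => algebraMap (Rn K n) Loc (X (Sum.inr k))) with hfn
      set φ : Rn K n →ₐ[K] Loc := aeval fn with hφ
      have hφC : ∀ a : K, φ (C a) = algebraMap (Rn K n) Loc (C a) := by
        intro a
        rw [hφ, aeval_C, RingHom.algebraMap_toAlgebra, RingHom.comp_apply]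
        rfl
      have hφX_inr : ∀ k, φ (X (Sum.inr k)) = algebraMap (Rn K n) Loc (X (Sum.inr k)) := by
        intro k
        rw [hφ, aeval_X, hfn, Sum.elim_inr]
      have hφX_inl_ne : ∀ q, ¬((q.1.2 : ℕ) = l ∧ (q.1.1 : ℕ) < t) →
          φ (X (Sum.inl q)) = algebraMap (Rn K n) Loc (X (Sum.inl q)) := by
        intro q hq
        rw [hφ, aeval_X, hfn, Sum.elim_inl, if_neg hq]
      have hφy : φ y = algebraMap (Rn K n) Loc y := hφX_inr yv
      have hφGnl : ∀ i : ℕ, i < t → φ (Gn l i) = algebraMap (Rn K n) Loc (Gn l i) := by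
        intro i hi
        unfold Gn
        rw [map_sum, map_sum]
        refine Finset.sum_congr rfl (fun k hk => ?_)
        have hkl : (k : ℕ) < l := (Finset.mem_filter.mp hk).2
        rw [_root_.map_mul, _root_.map_mul]
        congr 1
        · unfold xxn
          split
          · next h =>
            unfold xx
            split
            · next h1 => exact hφX_inl_ne _ (fun hc => absurd (show (k:ℕ) = l from hc.1) (by omega))
            · split
              · next h2 =>
                rw [map_neg, map_neg]
                congr 1
                refine hφX_inl_ne _ ?_
                rintro ⟨hc1, -⟩
                exact absurd (show i = l from hc1) (by omega)
              · simp
          · simp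
        · exact hφX_inr k
      have hxu : ∀ (i : ℕ) (hi : i < t), (xxn i yv : Rn K n)
          = X (Sum.inl ⟨(⟨i, by omega⟩, yv), by simp only [hyv, Fin.mk_lt_mk]; omega⟩) := by
        intro i hi
        unfold xxn
        rw [dif_pos (by omega : i < n)]
        unfold xx
        rw [dif_pos (by simp only [hyv, Fin.mk_lt_mk]; omega : (⟨i, by omega⟩ : Fin n) < yv)]
      have hφG1 : ∀ i : ℕ, i < t → φ (Gn (l+1) i) = 0 := by
        intro i hi
        rw [Gn_succ l hln' i, ← hyv, map_add, _root_.map_mul, hφGnl i hi]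
        have hyyyv : (yy yv : Rn K n) = y := hy.symm
        rw [hyyyv, hφy, hxu i hi, hφ, aeval_X, hfn, Sum.elim_inl]
        rw [if_pos ⟨rfl, hi⟩]
        have hinv := IsLocalization.Away.mul_invSelf (S := Loc) y
        linear_combination (-(algebraMap (Rn K n) Loc (Gn l i))) * hinv
      have hIker : (Ide (l+1) t : Ideal (Rn K n)) ≤ RingHom.ker (φ : Rn K n →+* Loc) := by
        rw [Ide, Ideal.span_le]
        rintro p ⟨i, rfl⟩
        rw [SetLike.mem_coe, RingHom.mem_ker]
        exact hφG1 _ i.isLt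
      have hxu' : ∀ q : {p : Fin n × Fin n // p.1 < p.2}, ((q.1.2 : ℕ) = l ∧ (q.1.1 : ℕ) < t) →
          (xxn ((q.1.1 : Fin n) : ℕ) yv : Rn K n) = X (Sum.inl q) := by
        rintro ⟨⟨qa, qb⟩, hab⟩ ⟨h1, h2⟩
        rw [xxn_coe qa yv]
        have hqb : qb = yv := Fin.ext h1
        subst hqb
        unfold xx
        rw [dif_pos hab]
      -- reduction lemma
      have lemA : ∀ f : Rn K n, ∃ (d : ℕ) (r : Rn K n),
          y^d * f - r ∈ (Ide (l+1) t : Ideal (Rn K n)) ∧ φ r = algebraMap (Rn K n) Loc r := by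
        intro f
        induction f using MvPolynomial.induction_on with
        | C a => exact ⟨0, C a, by simp, hφC a⟩
        | add p q hp hq =>
            obtain ⟨d1, r1, h1, e1⟩ := hp
            obtain ⟨d2, r2, h2, e2⟩ := hq
            refine ⟨d1 + d2, y^d2 * r1 + y^d1 * r2, ?_, ?_⟩
            · have : y^(d1+d2) * (p+q) - (y^d2*r1 + y^d1*r2)
                  = y^d2 * (y^d1 * p - r1) + y^d1 * (y^d2 * q - r2) := by ring
              rw [this]
              exact Ideal.add_mem _ (Ideal.mul_mem_left _ _ h1) (Ideal.mul_mem_left _ _ h2)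
            · simp only [map_add, _root_.map_mul, map_pow, hφy, e1, e2]
        | mul_X p v hp =>
            obtain ⟨d, r, h1, e1⟩ := hp
            rcases v with q | k
            · by_cases hq : (q.1.2 : ℕ) = l ∧ (q.1.1 : ℕ) < t
              · have hXq : (X (Sum.inl q) : Rn K n) = xxn (q.1.1 : ℕ) yv :=
                  (hxu' q hq).symm
                have hGrel : (X (Sum.inl q) : Rn K n) * y + Gn l (q.1.1 : ℕ)
                    = Gn (l+1) (q.1.1 : ℕ) := by
                  rw [Gn_succ l hln', ← hyv, hXq]
                  have : (yy yv : Rn K n) = y := hy.symm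
                  rw [this]; ring
                refine ⟨d+1, -(r * Gn l (q.1.1 : ℕ)), ?_, ?_⟩
                · have : y^(d+1) * (p * X (Sum.inl q)) - -(r * Gn l (q.1.1 : ℕ))
                      = (y^d * p - r) * (y * X (Sum.inl q))
                        + r * (X (Sum.inl q) * y + Gn l (q.1.1 : ℕ)) := by ring
                  rw [this, hGrel]
                  exact Ideal.add_mem _ (Ideal.mul_mem_right _ _ h1)
                    (Ideal.mul_mem_left _ _ (Gn_mem_Ide hq.2))
                · rw [map_neg, map_neg, _root_.map_mul, _root_.map_mul, e1, hφGnl _ hq.2]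
              · refine ⟨d, r * X (Sum.inl q), ?_, ?_⟩
                · have : y^d * (p * X (Sum.inl q)) - r * X (Sum.inl q)
                      = (y^d*p - r) * X (Sum.inl q) := by ring
                  rw [this]
                  exact Ideal.mul_mem_right _ _ h1
                · rw [_root_.map_mul, _root_.map_mul, e1, hφX_inl_ne q hq]
            · refine ⟨d, r * X (Sum.inr k), ?_, ?_⟩
              · have : y^d * (p * X (Sum.inr k)) - r * X (Sum.inr k)
                    = (y^d*p - r) * X (Sum.inr k) := by ring
                rw [this]
                exact Ideal.mul_mem_right _ _ h1
              · rw [_root_.map_mul, _root_.map_mul, e1, hφX_inr k]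
      -- the colon ideal property
      have colon : ∀ f : Rn K n, y * f ∈ (Ide (l+1) t : Ideal (Rn K n)) →
          f ∈ (Ide (l+1) t : Ideal (Rn K n)) := by
        intro f hf
        obtain ⟨cf, hcf⟩ := mem_Ide_iff.mp hf
        set c : ℕ → Rn K n := fun i => if h : i < t then cf ⟨i, h⟩ else 0 with hcdef
        have hc : ∑ i ∈ range t, c i * Gn (l+1) i = y * f := by
          rw [← hcf, ← Fin.sum_univ_eq_sum_range (fun i => c i * Gn (l+1) i) t]
          refine Finset.sum_congr rfl (fun i _ => ?_)
          rw [hcdef]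
          simp [i.is_lt]
        set π : Rn K n →ₐ[K] Rn K n := aeval (fun v => if v = Sum.inr yv then 0 else X v) with hπ
        have hπy : π y = 0 := by
          have h1 : (y : Rn K n) = X (Sum.inr yv) := hy
          rw [h1, hπ, aeval_X, if_pos rfl]
        have hπxxn : ∀ (i : ℕ) (k : Fin n), π (xxn i k) = xxn i k := by
          intro i k
          unfold xxn
          split
          · unfold xx
            split
            · rw [hπ, aeval_X, if_neg (by simp)]
            · split
              · rw [map_neg, hπ, aeval_X, if_neg (by simp)]
              · rw [map_zero]
          · rw [map_zero]
        have hπG : ∀ i : ℕ, π (Gn l i) = Gn l i := by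
          intro i
          unfold Gn
          rw [map_sum]
          refine Finset.sum_congr rfl (fun k hk => ?_)
          have hkm : (k : ℕ) < l := (Finset.mem_filter.mp hk).2
          rw [_root_.map_mul, hπxxn]
          congr 1
          have hyk : (yy k : Rn K n) = X (Sum.inr k) := rfl
          rw [hyk, hπ, aeval_X, if_neg ?_]
          intro hkv
          have hkyv : k = yv := Sum.inr.inj hkv
          have : (k : ℕ) = l := by rw [hkyv, hyv]
          omega
        have hπG1 : ∀ i : ℕ, π (Gn (l+1) i) = Gn l i := by
          intro i
          rw [Gn_succ l hln' i, ← hyv, map_add, _root_.map_mul, hπxxn]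
          have h1 : (yy yv : Rn K n) = y := hy.symm
          rw [h1, hπy, mul_zero, add_zero, hπG]
        have hrel : ∑ i ∈ range t, π (c i) * Gn l i = 0 := by
          have h0 := congrArg π hc
          rw [map_sum, _root_.map_mul, hπy, zero_mul] at h0
          rw [← h0]
          exact Finset.sum_congr rfl (fun i _ => by rw [_root_.map_mul, hπG1])
        obtain ⟨e, he1, he2, he3⟩ := koszul (le_of_lt hln') t hlt
          (fun j hj => IH (le_of_lt hln') j (by omega)) (fun i => π (c i)) hrel
        have hb : ∀ i : ℕ, ∃ b : Rn K n, c i = π (c i) + y * b := by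
          intro i
          have hmem := sub_aeval_mem (Sum.inr yv) (c i)
          rw [← hπ, Ideal.mem_span_singleton] at hmem
          obtain ⟨b, hbeq⟩ := hmem
          refine ⟨b, ?_⟩
          rw [show (X (Sum.inr yv) : Rn K n) = y from rfl] at hbeq
          linear_combination hbeq
        choose b hbdef using hb
        have hyG : ∀ j : ℕ, (Gn l j : Rn K n) = Gn (l+1) j - xxn j yv * y := by
          intro j
          rw [Gn_succ l hln' j, ← hyv]
          have h1 : (yy yv : Rn K n) = y := hy.symm
          rw [h1]
          ring
        have hskew0 : ∑ i ∈ range t, ∑ j ∈ range t,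
            e i j * (Gn (l+1) j * Gn (l+1) i) = (0 : Rn K n) :=
          sum_skew e he1 he2 (fun i => Gn (l+1) i)
        have key : y * f = y * (∑ i ∈ range t, b i * Gn (l+1) i
            - ∑ i ∈ range t, ∑ j ∈ range t, e i j * (xxn j yv * Gn (l+1) i)) := by
          have step1 : y * f = ∑ i ∈ range t,
              ((∑ j ∈ range t, e i j * Gn l j) + y * b i) * Gn (l+1) i := by
            rw [← hc]
            refine Finset.sum_congr rfl (fun i hi => ?_)
            rw [← he3 i (mem_range.mp hi), ← hbdef i]
          have step2 : ∀ i : ℕ, ((∑ j ∈ range t, e i j * Gn l j) + y * b i) * Gn (l+1) i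
              = (∑ j ∈ range t, e i j * (Gn l j * Gn (l+1) i)) + y * (b i * Gn (l+1) i) := by
            intro i
            rw [add_mul, Finset.sum_mul]
            congr 1
            · exact Finset.sum_congr rfl (fun j _ => by ring)
            · ring
          have step3 : ∀ i j : ℕ, (e i j * (Gn l j * Gn (l+1) i) : Rn K n)
              = e i j * (Gn (l+1) j * Gn (l+1) i) - y * (e i j * (xxn j yv * Gn (l+1) i)) := by
            intro i j
            rw [hyG j]
            ring
          calc y * f
              = ∑ i ∈ range t, (((∑ j ∈ range t, e i j * Gn l j) + y * b i) * Gn (l+1) i) :=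
                step1
            _ = ∑ i ∈ range t, ((∑ j ∈ range t, e i j * (Gn l j * Gn (l+1) i))
                  + y * (b i * Gn (l+1) i)) :=
                Finset.sum_congr rfl (fun i _ => step2 i)
            _ = (∑ i ∈ range t, ∑ j ∈ range t, e i j * (Gn l j * Gn (l+1) i))
                  + y * ∑ i ∈ range t, b i * Gn (l+1) i := by
                rw [Finset.sum_add_distrib, Finset.mul_sum]
            _ = (∑ i ∈ range t, ∑ j ∈ range t, (e i j * (Gn (l+1) j * Gn (l+1) i)
                  - y * (e i j * (xxn j yv * Gn (l+1) i))))
                  + y * ∑ i ∈ range t, b i * Gn (l+1) i := by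
                refine congrArg₂ (· + ·) (Finset.sum_congr rfl fun i _ =>
                  Finset.sum_congr rfl fun j _ => step3 i j) rfl
            _ = ((∑ i ∈ range t, ∑ j ∈ range t, e i j * (Gn (l+1) j * Gn (l+1) i))
                  - ∑ i ∈ range t, ∑ j ∈ range t, y * (e i j * (xxn j yv * Gn (l+1) i)))
                  + y * ∑ i ∈ range t, b i * Gn (l+1) i := by
                rw [← Finset.sum_sub_distrib]
                refine congrArg₂ (· + ·) (Finset.sum_congr rfl fun i _ => ?_) rfl
                rw [← Finset.sum_sub_distrib]
            _ = y * (∑ i ∈ range t, b i * Gn (l+1) i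
                  - ∑ i ∈ range t, ∑ j ∈ range t, e i j * (xxn j yv * Gn (l+1) i)) := by
                rw [hskew0]
                rw [show ∑ i ∈ range t, ∑ j ∈ range t, y * (e i j * (xxn j yv * Gn (l+1) i))
                    = y * ∑ i ∈ range t, ∑ j ∈ range t, (e i j * (xxn j yv * Gn (l+1) i)) by
                  rw [Finset.mul_sum]
                  exact Finset.sum_congr rfl fun i _ => by rw [Finset.mul_sum]]
                ring
        have f_eq : f = ∑ i ∈ range t, b i * Gn (l+1) i
            - ∑ i ∈ range t, ∑ j ∈ range t, e i j * (xxn j yv * Gn (l+1) i) :=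
          mul_left_cancel₀ hy0 key
        rw [f_eq]
        refine Ideal.sub_mem _
          (Ideal.sum_mem _ (fun i hi => Ideal.mul_mem_left _ _ (Gn_mem_Ide (mem_range.mp hi))))
          (Ideal.sum_mem _ (fun i hi => Ideal.sum_mem _ (fun j hj =>
            Ideal.mul_mem_left _ _ (Ideal.mul_mem_left _ _ (Gn_mem_Ide (mem_range.mp hi))))))
      have colonPow : ∀ (d : ℕ) (f : Rn K n), y^d * f ∈ (Ide (l+1) t : Ideal (Rn K n)) →
          f ∈ (Ide (l+1) t : Ideal (Rn K n)) := by
        intro d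
        induction d with
        | zero => intro f hf; simpa using hf
        | succ d ihd =>
            intro f hf
            refine ihd f (colon _ ?_)
            rw [show y * (y^d * f) = y^(d+1) * f by ring]
            exact hf
      have hinj : Function.Injective (algebraMap (Rn K n) Loc) :=
        IsLocalization.injective Loc (powers_le_nonZeroDivisors_of_noZeroDivisors hy0)
      have hker : (Ide (l+1) t : Ideal (Rn K n)) = RingHom.ker (φ : Rn K n →+* Loc) := by
        refine le_antisymm hIker ?_
        intro f hf
        rw [RingHom.mem_ker] at hf
        obtain ⟨d, r, hdr, hr⟩ := lemA f
        have h0 : φ (y^d * f - r) = 0 := by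
          have hm := hIker hdr
          rwa [RingHom.mem_ker] at hm
        rw [map_sub, _root_.map_mul, map_pow, hφy] at h0
        rw [show ((φ : Rn K n →+* Loc) f : Loc) = φ f from rfl] at hf
        rw [hf, mul_zero, zero_sub, neg_eq_zero, hr] at h0
        have hr0 : r = 0 := hinj (by rw [h0, map_zero])
        rw [hr0, sub_zero] at hdr
        exact colonPow d f hdr
      haveI : IsDomain Loc :=
        IsLocalization.isDomain_localization (powers_le_nonZeroDivisors_of_noZeroDivisors hy0)
      rw [hker]
      exact RingHom.ker_isPrime _

end SkewAux

/-- For the generic skew-symmetric `n × n` matrix `X` and generic column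
`Y`, for every `1 ≤ t ≤ n - 2`, the ideal `⟨g_1, …, g_t⟩` is prime in
`K[x_{ij} (i < j), y_j]`. -/
theorem span_g_isPrime_skewSymmetric
    (K : Type*) [Field K] (n : ℕ)
    (Xmat : Matrix (Fin n) (Fin n)
      (MvPolynomial ({p : Fin n × Fin n // p.1 < p.2} ⊕ Fin n) K))
    (hX : ∀ i j, Xmat i j =
      if h : i < j then MvPolynomial.X (Sum.inl ⟨(i, j), h⟩)
      else if h' : j < i then - MvPolynomial.X (Sum.inl ⟨(j, i), h'⟩)
      else 0)
    (g : Fin n → MvPolynomial ({p : Fin n × Fin n // p.1 < p.2} ⊕ Fin n) K)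
    (hg : ∀ i, g i = ∑ k, Xmat i k * MvPolynomial.X (Sum.inr k)) :
    ∀ t : ℕ, 1 ≤ t → t ≤ n - 2 →
      (Ideal.span {p | ∃ i : Fin n, (i : ℕ) < t ∧ p = g i}).IsPrime := by
  intro t ht1 ht2
  have hn3 : 3 ≤ n := by omega
  have hgG : ∀ i : Fin n, g i = SkewAux.Gn (K := K) (n := n) n (i : ℕ) := by
    intro i
    rw [hg i]
    unfold SkewAux.Gn
    have hfil : (Finset.univ.filter (fun k : Fin n => (k:ℕ) < n)) = Finset.univ := by
      apply Finset.filter_true_of_mem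
      intro k _
      exact k.isLt
    rw [hfil]
    refine Finset.sum_congr rfl fun k _ => ?_
    congr 1
    rw [SkewAux.xxn_coe i k, hX i k]
    rfl
  have hset : {p | ∃ i : Fin n, (i : ℕ) < t ∧ p = g i}
      = Set.range (fun i : Fin t => SkewAux.Gn (K := K) (n := n) n (i : ℕ)) := by
    ext p
    constructor
    · rintro ⟨i, hi, rfl⟩
      exact ⟨⟨(i : ℕ), hi⟩, (hgG i).symm⟩
    · rintro ⟨i, rfl⟩
      have hin : (i : ℕ) < n := by omega
      exact ⟨⟨(i : ℕ), hin⟩, i.isLt, (hgG ⟨(i : ℕ), hin⟩).symm⟩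
  rw [hset]
  have := SkewAux.Ide_isPrime (K := K) (n := n) n le_rfl t ht2
  simpa [SkewAux.Ide] using this
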